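/- Let X be a finite type, σ a permutation of X, and d : X → ℂ. Let P_σ denote the permutation matrix of σ and D the diagonal matrix with entries d. Then det(1 − P_σ · D) = ∏_{O} (1 − ∏_{i ∈ O} d(i)), where the outer product ranges over all orbits O of σ on X (including fixed points). -/

import Mathlib

open Finset Equiv

namespace DetPermAux

variable {X : Type*} [Fintype X] [DecidableEq X]

/-- orbit of `i` as a finset -/
def orb (π : Equiv.Perm X) (i : X) : Finset X := Finset.univ.filter (fun j => π.SameCycle i j)

lemma mem_orb {π : Equiv.Perm X} {i j : X} : j ∈ orb π i ↔ π.SameCycle i j := by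
  simp [orb]

lemma self_mem_orb (π : Equiv.Perm X) (i : X) : i ∈ orb π i := mem_orb.2 (Equiv.Perm.SameCycle.refl _ _)

lemma orb_eq_of_sameCycle {π : Equiv.Perm X} {i j : X} (h : π.SameCycle i j) :
    orb π i = orb π j := by
  ext k
  simp only [mem_orb]
  exact ⟨fun hk => h.symm.trans hk, fun hk => h.trans hk⟩

lemma orb_disjoint {π : Equiv.Perm X} {i j : X} (h : orb π i ≠ orb π j) :
    Disjoint (orb π i) (orb π j) := by
  rw [Finset.disjoint_left]
  intro k hk hk'
  exact h ((orb_eq_of_sameCycle (mem_orb.1 hk)).trans (orb_eq_of_sameCycle (mem_orb.1 hk')).symm)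

lemma orb_inv_mem {π : Equiv.Perm X} {i : X} : ∀ j, j ∈ orb π i ↔ π j ∈ orb π i := by
  intro j
  simp only [mem_orb]
  exact (Equiv.Perm.sameCycle_apply_right).symm

/-- invariance from mapsTo, by finiteness -/
lemma inv_of_mapsTo {π : Equiv.Perm X} {t : Finset X} (h : ∀ i ∈ t, π i ∈ t) :
    ∀ i, i ∈ t ↔ π i ∈ t := by
  have himg : t.image π = t := by
    apply Finset.eq_of_subset_of_card_le
    · intro x hx
      obtain ⟨y, hy, rfl⟩ := Finset.mem_image.1 hx
      exact h y hy
    · rw [Finset.card_image_of_injective _ π.injective]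
  intro i
  constructor
  · exact h i
  · intro hi
    rw [← himg] at hi
    obtain ⟨y, hy, hyi⟩ := Finset.mem_image.1 hi
    rwa [← π.injective hyi]

lemma zpow_mem {π : Equiv.Perm X} {t : Finset X} (h : ∀ i, i ∈ t ↔ π i ∈ t) :
    ∀ (n : ℤ) (i : X), i ∈ t → (π ^ n) i ∈ t := by
  intro n
  induction n using Int.induction_on with
  | zero => simp
  | succ k ih =>
      intro i hi
      have heq : (π ^ ((k : ℤ) + 1)) i = (π ^ (k : ℤ)) (π i) := by
        rw [zpow_add_one, Equiv.Perm.mul_apply]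
      rw [heq]
      exact ih (π i) ((h i).1 hi)
  | pred k ih =>
      intro i hi
      have heq : (π ^ ((-k : ℤ) - 1)) i = (π ^ (-k : ℤ)) (π⁻¹ i) := by
        rw [zpow_sub_one, Equiv.Perm.mul_apply]
      apply heq ▸ ih (π⁻¹ i) ?_
      have h2 := h (π⁻¹ i)
      rw [show π (π⁻¹ i) = i from Equiv.apply_symm_apply π i] at h2
      exact h2.2 hi

lemma orb_subset_of_inv {π : Equiv.Perm X} {t : Finset X} (h : ∀ i, i ∈ t ↔ π i ∈ t)
    {i : X} (hi : i ∈ t) : orb π i ⊆ t := by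
  intro j hj
  obtain ⟨n, hn⟩ := mem_orb.1 hj
  rw [← hn]
  exact zpow_mem h n i hi

/-- restriction of `π` to an invariant finset, as a permutation of `X` -/
noncomputable def rP (π : Equiv.Perm X) (t : Finset X) : Equiv.Perm X :=
  if h : ∀ i, i ∈ t ↔ π i ∈ t then Equiv.Perm.ofSubtype (π.subtypePerm (fun i => (h i).symm)) else 1

lemma rP_apply {π : Equiv.Perm X} {t : Finset X} (h : ∀ i, i ∈ t ↔ π i ∈ t) (i : X) :
    rP π t i = if i ∈ t then π i else i := by
  rw [rP, dif_pos h]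
  by_cases hi : i ∈ t
  · rw [if_pos hi, Equiv.Perm.ofSubtype_apply_of_mem _ hi]
    rfl
  · rw [if_neg hi, Equiv.Perm.ofSubtype_apply_of_not_mem _ hi]

lemma rP_empty (π : Equiv.Perm X) : rP π (∅ : Finset X) = 1 := by
  have h : ∀ i, i ∈ (∅ : Finset X) ↔ π i ∈ (∅ : Finset X) := by simp
  ext i
  rw [rP_apply h]
  simp

lemma union_inv {π : Equiv.Perm X} {s t : Finset X}
    (hs : ∀ i, i ∈ s ↔ π i ∈ s) (ht : ∀ i, i ∈ t ↔ π i ∈ t) :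
    ∀ i, i ∈ s ∪ t ↔ π i ∈ s ∪ t := by
  intro i
  simp only [Finset.mem_union, hs i, ht i]

lemma rP_union {π : Equiv.Perm X} {s t : Finset X} (hd : Disjoint s t)
    (hs : ∀ i, i ∈ s ↔ π i ∈ s) (ht : ∀ i, i ∈ t ↔ π i ∈ t) :
    rP π (s ∪ t) = rP π s * rP π t := by
  ext i
  rw [Equiv.Perm.mul_apply, rP_apply (union_inv hs ht), rP_apply hs, rP_apply ht]
  by_cases hit : i ∈ t
  · have his : i ∉ s := Finset.disjoint_right.1 hd hit
    rw [if_pos hit, if_pos (Finset.mem_union_right _ hit)]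
    have : π i ∉ s := fun hc => his (by
      have := Finset.disjoint_right.1 hd ((ht i).1 hit)
      exact absurd hc this)
    rw [if_neg this]
  · rw [if_neg hit]
    by_cases his : i ∈ s
    · rw [if_pos his, if_pos (Finset.mem_union_left _ his)]
    · rw [if_neg his, if_neg (by simp [his, hit])]

lemma rP_orb (π : Equiv.Perm X) (x : X) : rP π (orb π x) = π.cycleOf x := by
  ext i
  rw [rP_apply orb_inv_mem, Equiv.Perm.cycleOf_apply]
  simp [mem_orb]

lemma sign_rP_orb_mul (π : Equiv.Perm X) (x : X) (d : X → ℂ) :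
    ((Equiv.Perm.sign (rP π (orb π x)) : ℤ) : ℂ) * ∏ i ∈ orb π x, (-d i) =
      -(∏ i ∈ orb π x, d i) := by
  have hneg : ∏ i ∈ orb π x, (-d i) = (-1 : ℂ) ^ (orb π x).card * ∏ i ∈ orb π x, d i := by
    rw [← Finset.prod_const (-1 : ℂ), ← Finset.prod_mul_distrib]
    simp
  rw [rP_orb, hneg]
  by_cases hx : π x = x
  · have h1 : π.cycleOf x = 1 := (Equiv.Perm.cycleOf_eq_one_iff π).2 hx
    have horb : orb π x = {x} := by
      ext j
      simp only [mem_orb, Finset.mem_singleton]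
      constructor
      · rintro ⟨n, rfl⟩
        exact (Equiv.Perm.zpow_apply_eq_self_of_apply_eq_self hx n).symm ▸ rfl
      · rintro rfl
        exact Equiv.Perm.SameCycle.refl _ _
    rw [h1, horb]
    rw [Equiv.Perm.sign_one]
    norm_num
  · have hc := Equiv.Perm.isCycle_cycleOf π hx
    have hsupp : (π.cycleOf x).support = orb π x := by
      ext j
      rw [Equiv.Perm.mem_support_cycleOf_iff, mem_orb]
      simp [Equiv.Perm.mem_support, hx]
    rw [hc.sign, hsupp]
    push_cast
    rw [neg_mul, ← mul_assoc, ← pow_add, ← two_mul, pow_mul, neg_one_sq, one_pow, one_mul]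

lemma inner_sum (π : Equiv.Perm X) (d : X → ℂ) (t : Finset X) :
    ∑ τ : Equiv.Perm X, ((Equiv.Perm.sign τ : ℤ) : ℂ) *
      ((∏ i ∈ t, (if τ i = π i then -d i else 0)) *
       ∏ i ∈ Finset.univ \ t, (if τ i = i then (1:ℂ) else 0)) =
    if ∀ i, i ∈ t ↔ π i ∈ t then
      ((Equiv.Perm.sign (rP π t) : ℤ) : ℂ) * ∏ i ∈ t, (-d i) else 0 := by
  by_cases h : ∀ i, i ∈ t ↔ π i ∈ t
  · rw [if_pos h]
    rw [Finset.sum_eq_single_of_mem (rP π t) (Finset.mem_univ _)]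
    · have h1 : ∏ i ∈ t, (if rP π t i = π i then -d i else 0) = ∏ i ∈ t, (-d i) := by
        apply Finset.prod_congr rfl
        intro i hi
        rw [rP_apply h, if_pos hi, if_pos rfl]
      have h2 : ∏ i ∈ Finset.univ \ t, (if rP π t i = i then (1:ℂ) else 0) = 1 := by
        apply Finset.prod_eq_one
        intro i hi
        rw [rP_apply h, if_neg (Finset.mem_sdiff.1 hi).2, if_pos rfl]
      rw [h1, h2, mul_one]
    · intro τ _ hτ
      have : ∃ i, τ i ≠ rP π t i := by
        by_contra hc
        push_neg at hc
        exact hτ (Equiv.ext hc)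
      obtain ⟨i, hi⟩ := this
      rw [rP_apply h] at hi
      by_cases hit : i ∈ t
      · rw [if_pos hit] at hi
        have hz : (∏ i ∈ t, if τ i = π i then -d i else 0) = 0 :=
          Finset.prod_eq_zero hit (if_neg hi)
        rw [hz]
        ring
      · rw [if_neg hit] at hi
        have hz : (∏ i ∈ Finset.univ \ t, if τ i = i then (1:ℂ) else 0) = 0 :=
          Finset.prod_eq_zero (Finset.mem_sdiff.2 ⟨Finset.mem_univ _, hit⟩) (if_neg hi)
        rw [hz]
        ring
  · rw [if_neg h]
    apply Finset.sum_eq_zero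
    intro τ _
    by_contra hne
    have hp1 : ∏ i ∈ t, (if τ i = π i then -d i else 0) ≠ 0 := by
      intro hz; apply hne; rw [hz]; ring
    have hp2 : ∏ i ∈ Finset.univ \ t, (if τ i = i then (1:ℂ) else 0) ≠ 0 := by
      intro hz; apply hne; rw [hz]; ring
    have hc1 : ∀ i ∈ t, τ i = π i := by
      intro i hi
      by_contra hc
      exact hp1 (Finset.prod_eq_zero hi (if_neg hc))
    have hc2 : ∀ i, i ∉ t → τ i = i := by
      intro i hi
      by_contra hc
      exact hp2 (Finset.prod_eq_zero (Finset.mem_sdiff.2 ⟨Finset.mem_univ _, hi⟩) (if_neg hc))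
    apply h
    apply inv_of_mapsTo
    intro i hi
    by_contra hpi
    have e1 : τ (π i) = π i := hc2 _ hpi
    have e2 : τ i = π i := hc1 i hi
    have : π i = i := τ.injective (e1.trans e2.symm)
    rw [← this] at hi
    exact hpi hi

lemma inv_biUnion {π : Equiv.Perm X} {T : Finset (Finset X)}
    (hT : ∀ O ∈ T, ∃ x, O = orb π x) :
    ∀ i, i ∈ T.biUnion id ↔ π i ∈ T.biUnion id := by
  apply inv_of_mapsTo
  intro i hi
  obtain ⟨O, hO, hiO⟩ := Finset.mem_biUnion.1 hi
  obtain ⟨x, rfl⟩ := hT O hO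
  exact Finset.mem_biUnion.2 ⟨_, hO, (orb_inv_mem i).1 hiO⟩

lemma prodT (π : Equiv.Perm X) (d : X → ℂ) :
    ∀ T : Finset (Finset X), (∀ O ∈ T, ∃ x, O = orb π x) →
      ((Equiv.Perm.sign (rP π (T.biUnion id)) : ℤ) : ℂ) * ∏ i ∈ T.biUnion id, (-d i)
        = ∏ O ∈ T, (-(∏ i ∈ O, d i)) := by
  intro T
  induction T using Finset.induction_on with
  | empty => intro _; simp [rP_empty]
  | @insert O T hOT ih =>
      intro hT
      obtain ⟨x, hx⟩ := hT O (Finset.mem_insert_self _ _)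
      have hT' : ∀ O' ∈ T, ∃ y, O' = orb π y := fun O' h' => hT O' (Finset.mem_insert_of_mem h')
      have hd : Disjoint O (T.biUnion id) := by
        rw [Finset.disjoint_biUnion_right]
        intro O' hO'
        obtain ⟨y, hy⟩ := hT' O' hO'
        have hne : O ≠ O' := fun hc => hOT (hc ▸ hO')
        rw [hx, hy]
        exact orb_disjoint (by rw [← hx, ← hy]; exact hne)
      have hinvO : ∀ i, i ∈ O ↔ π i ∈ O := by rw [hx]; exact orb_inv_mem
      have hinvT : ∀ i, i ∈ T.biUnion id ↔ π i ∈ T.biUnion id := inv_biUnion hT'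
      rw [Finset.biUnion_insert]
      simp only [id_eq]
      rw [rP_union hd hinvO hinvT, map_mul, Units.val_mul, Int.cast_mul,
        Finset.prod_union hd, Finset.prod_insert hOT, ← ih hT']
      rw [hx]
      rw [show (∏ i ∈ orb π x, d i) = -(((Equiv.Perm.sign (rP π (orb π x)) : ℤ) : ℂ) *
        ∏ i ∈ orb π x, (-d i)) from by rw [sign_rP_orb_mul]; ring]
      ring

lemma biUnion_filter_orbs {π : Equiv.Perm X} {t : Finset X} (h : ∀ i, i ∈ t ↔ π i ∈ t) :
    ((Finset.univ.image (orb π)).filter (· ⊆ t)).biUnion id = t := by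
  ext j
  rw [Finset.mem_biUnion]
  constructor
  · rintro ⟨O, hO, hjO⟩
    exact (Finset.mem_filter.1 hO).2 hjO
  · intro hj
    refine ⟨orb π j, Finset.mem_filter.2 ⟨Finset.mem_image_of_mem _ (Finset.mem_univ j),
      orb_subset_of_inv h hj⟩, self_mem_orb π j⟩

lemma filter_orbs_biUnion {π : Equiv.Perm X} {T : Finset (Finset X)}
    (hT : T ⊆ Finset.univ.image (orb π)) :
    (Finset.univ.image (orb π)).filter (· ⊆ T.biUnion id) = T := by
  ext O
  rw [Finset.mem_filter]
  constructor
  · rintro ⟨hO, hsub⟩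
    obtain ⟨x, -, rfl⟩ := Finset.mem_image.1 hO
    have hx : x ∈ T.biUnion id := hsub (self_mem_orb π x)
    obtain ⟨O', hO', hxO'⟩ := Finset.mem_biUnion.1 hx
    obtain ⟨y, -, rfl⟩ := Finset.mem_image.1 (hT hO')
    rwa [← orb_eq_of_sameCycle (mem_orb.1 (by simpa using hxO'))]
  · intro hO
    exact ⟨hT hO, Finset.subset_biUnion_of_mem id hO⟩

lemma key (π : Equiv.Perm X) (d : X → ℂ) :
    (∑ τ : Equiv.Perm X, ((Equiv.Perm.sign τ : ℤ) : ℂ) *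
        ∏ i, ((if τ i = π i then -d i else 0) + (if τ i = i then (1:ℂ) else 0)))
      = ∏ O ∈ Finset.univ.image (orb π), (1 - ∏ i ∈ O, d i) := by
  simp_rw [Finset.prod_add, Finset.mul_sum]
  rw [Finset.sum_comm]
  rw [Finset.sum_congr rfl (fun t _ => inner_sum π d t)]
  rw [← Finset.sum_filter]
  have rhs1 : ∀ O ∈ Finset.univ.image (orb π),
      (1 - ∏ i ∈ O, d i) = (-(∏ i ∈ O, d i) + 1) := fun O _ => by ring
  rw [Finset.prod_congr rfl rhs1, Finset.prod_add]
  simp only [Finset.prod_const_one, mul_one]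
  refine Finset.sum_bij'
    (i := fun t _ => (Finset.univ.image (orb π)).filter (· ⊆ t))
    (j := fun T _ => T.biUnion id) ?_ ?_ ?_ ?_ ?_
  · intro t _
    exact Finset.mem_powerset.2 (Finset.filter_subset _ _)
  · intro T hT
    have hT' := Finset.mem_powerset.1 hT
    have horb : ∀ O ∈ T, ∃ x, O = orb π x := by
      intro O hO
      obtain ⟨x, -, rfl⟩ := Finset.mem_image.1 (hT' hO)
      exact ⟨x, rfl⟩
    refine Finset.mem_filter.2 ⟨Finset.mem_powerset.2 (Finset.subset_univ _), inv_biUnion horb⟩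
  · intro t ht
    exact biUnion_filter_orbs (Finset.mem_filter.1 ht).2
  · intro T hT
    exact filter_orbs_biUnion (Finset.mem_powerset.1 hT)
  · intro t ht
    have hinv := (Finset.mem_filter.1 ht).2
    have horb : ∀ O ∈ (Finset.univ.image (orb π)).filter (· ⊆ t), ∃ x, O = orb π x := by
      intro O hO
      obtain ⟨x, -, rfl⟩ := Finset.mem_image.1 (Finset.mem_filter.1 hO).1
      exact ⟨x, rfl⟩
    conv_lhs => rw [← biUnion_filter_orbs hinv]
    exact prodT π d _ horb

end DetPermAux


/-- For a permutation `σ` of a finite type `X` and a diagonal matrix `D` with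
entries `d`, `det(1 - P_σ·D)` equals the product over the orbits `O` of `σ`
of `1 - ∏_{i ∈ O} d(i)`. -/
theorem det_one_sub_permMatrix_mul_diagonal {X : Type*} [Fintype X] [DecidableEq X]
    (σ : Equiv.Perm X) (d : X → ℂ) :
    Matrix.det ((1 : Matrix X X ℂ) - σ.permMatrix ℂ * Matrix.diagonal d) =
      ∏ O ∈ Finset.univ.image (fun i => Finset.univ.filter (fun j => σ.SameCycle i j)),
        (1 - ∏ i ∈ O, d i) := by
  have horb : (Finset.univ.image (DetPermAux.orb σ⁻¹)) =
      Finset.univ.image (fun i => Finset.univ.filter (fun j => σ.SameCycle i j)) := by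
    congr 1
    funext i
    rw [DetPermAux.orb]
    ext j
    simp [Equiv.Perm.sameCycle_inv]
  rw [← horb, ← DetPermAux.key σ⁻¹ d, Matrix.det_apply]
  apply Finset.sum_congr rfl
  intro τ _
  rw [Units.smul_def, zsmul_eq_mul]
  congr 1
  apply Finset.prod_congr rfl
  intro i _
  simp only [Matrix.sub_apply, Matrix.one_apply, Matrix.mul_diagonal, Equiv.Perm.permMatrix,
    PEquiv.toMatrix_apply, Equiv.toPEquiv_apply, Option.mem_def, Option.some.injEq, ite_mul,
    one_mul, zero_mul]
  have hcond : (τ i = σ⁻¹ i) ↔ (σ (τ i) = i) := Equiv.Perm.eq_inv_iff_eq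
  have e2 : (if σ (τ i) = i then d i else 0) = (if τ i = σ⁻¹ i then d i else 0) :=
    if_congr hcond.symm rfl rfl
  rw [e2]
  by_cases h1 : τ i = σ⁻¹ i
  · rw [if_pos h1, if_pos h1]
    by_cases h2 : τ i = i
    · rw [if_pos h2]; ring
    · rw [if_neg h2]; ring
  · rw [if_neg h1, if_neg h1]
    by_cases h2 : τ i = i
    · rw [if_pos h2]; ring
    · rw [if_neg h2]; ring
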